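/- An m-isometry on a Banach space is not convex-cyclic. -/

import Mathlib

open Filter Finset Function Topology fwdDiff

private lemma fwdDiff_iter_zero_fun (j : ℕ) : (fwdDiff (1:ℕ))^[j] (0 : ℕ → ℝ) = 0 := by
  induction j with
  | zero => rfl
  | succ j ih =>
    rw [Function.iterate_succ_apply,
      show (fwdDiff (1:ℕ)) (0 : ℕ → ℝ) = 0 from funext fun n => sub_self _, ih]

private lemma choose_ratio_tendsto : ∀ d k : ℕ, k < d →
    Tendsto (fun n : ℕ => (n.choose k : ℝ) / (n.choose d : ℝ)) atTop (𝓝 0) := by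
  intro d
  induction d with
  | zero => exact fun k hk => absurd hk (Nat.not_lt_zero k)
  | succ d ih =>
    have hd1 : Tendsto (fun n : ℕ => (n.choose d : ℝ) / (n.choose (d+1) : ℝ)) atTop (𝓝 0) := by
      have h1 : Tendsto (fun n : ℕ => ((d:ℝ)+1) / ((n:ℝ) - d)) atTop (𝓝 0) := by
        apply Tendsto.div_atTop tendsto_const_nhds
        exact tendsto_atTop_add_const_right _ _ tendsto_natCast_atTop_atTop
      apply h1.congr'
      filter_upwards [eventually_ge_atTop (d+1)] with n hn
      have hpos : 0 < n.choose (d+1) := Nat.choose_pos hn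
      have hd : d ≤ n := by omega
      have hnat := Nat.choose_succ_right_eq n d
      have hkey : (n.choose (d+1) : ℝ) * ((d:ℝ)+1) = (n.choose d : ℝ) * ((n:ℝ) - (d:ℝ)) := by
        have : ((n.choose (d+1) * (d+1) : ℕ) : ℝ) = ((n.choose d * (n - d) : ℕ) : ℝ) :=
          Nat.cast_inj.mpr hnat
        push_cast [Nat.cast_sub hd] at this
        linarith
      have hden1 : ((n:ℝ) - d) ≠ 0 := by
        have : (d:ℝ) < (n:ℝ) := by exact_mod_cast (by omega : d < n)
        linarith
      have hden2 : (n.choose (d+1) : ℝ) ≠ 0 := by exact_mod_cast hpos.ne'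
      field_simp
      linarith [hkey]
    intro k hk
    rcases Nat.lt_succ_iff_lt_or_eq.mp hk with hk' | rfl
    · have hmul := (ih k hk').mul hd1
      rw [mul_zero] at hmul
      apply hmul.congr'
      filter_upwards [eventually_ge_atTop d] with n hn
      have h0 : (n.choose d : ℝ) ≠ 0 := by
        exact_mod_cast (Nat.choose_pos hn).ne'
      field_simp
    · exact hd1

private lemma newton_trunc (a : ℕ → ℝ) (d : ℕ) (ha : (fwdDiff (1:ℕ))^[d+1] a = 0) (n : ℕ) :
    a n = ∑ k ∈ range (d+1), (n.choose k : ℝ) * (fwdDiff (1:ℕ))^[k] a 0 := by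
  have hzero : ∀ k, d + 1 ≤ k → (fwdDiff (1:ℕ))^[k] a = 0 := by
    intro k hk
    obtain ⟨j, rfl⟩ := Nat.exists_eq_add_of_le hk
    rw [add_comm, Function.iterate_add_apply, ha, fwdDiff_iter_zero_fun]
  have hnewton := shift_eq_sum_fwdDiff_iter (1:ℕ) a n 0
  simp only [zero_add, smul_eq_mul, mul_one, nsmul_eq_mul] at hnewton
  rw [hnewton]
  rcases le_total (d+1) (n+1) with h | h
  · rw [← Finset.sum_subset (Finset.range_subset_range.mpr h)]
    intro k hk1 hk2
    rw [hzero k (by simpa using hk2)]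
    simp
  · rw [Finset.sum_subset (Finset.range_subset_range.mpr h)]
    intro k hk1 hk2
    have : n < k := by simpa using hk2
    rw [Nat.choose_eq_zero_of_lt this]
    simp

private lemma tendsto_div_choose_fwdDiff (a : ℕ → ℝ) (d : ℕ) (ha : (fwdDiff (1:ℕ))^[d+1] a = 0) :
    Tendsto (fun n : ℕ => a n / (n.choose d : ℝ)) atTop (𝓝 ((fwdDiff (1:ℕ))^[d] a 0)) := by
  have hterm : ∀ k ∈ range (d+1), Tendsto
      (fun n : ℕ => (n.choose k : ℝ)/(n.choose d : ℝ) * (fwdDiff (1:ℕ))^[k] a 0) atTop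
      (𝓝 (if k = d then (fwdDiff (1:ℕ))^[d] a 0 else 0)) := by
    intro k hk
    rcases eq_or_lt_of_le (Nat.lt_succ_iff.mp (mem_range.mp hk)) with heq | hlt
    · subst heq
      rw [if_pos rfl]
      apply Tendsto.congr' _ (tendsto_const_nhds (x := (fwdDiff (1:ℕ))^[k] a 0))
      filter_upwards [eventually_ge_atTop k] with n hn
      rw [div_self (by exact_mod_cast (Nat.choose_pos hn).ne'), one_mul]
    · rw [if_neg (ne_of_lt hlt)]
      simpa using (choose_ratio_tendsto d k hlt).mul_const ((fwdDiff (1:ℕ))^[k] a 0)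
  have hsum := tendsto_finset_sum (range (d+1)) hterm
  rw [Finset.sum_ite_eq' (range (d+1)) d, if_pos (self_mem_range_succ d)] at hsum
  apply hsum.congr'
  apply Eventually.of_forall
  intro n
  beta_reduce
  rw [newton_trunc a d ha n, Finset.sum_div]
  exact Finset.sum_congr rfl fun k _ => by ring

private lemma aux_not_convexCyclic
    {𝕜 : Type*} [RCLike 𝕜] {X : Type*} [NormedAddCommGroup X] [NormedSpace 𝕜 X]
    [NormedSpace ℝ X] [IsScalarTower ℝ 𝕜 X] [Nontrivial X]
    (p : ℝ) (hp : 0 < p) :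
    ∀ (m : ℕ) (T : X →L[𝕜] X),
      (∀ x : X, ∑ k ∈ Finset.range (m + 1),
        (-1 : ℝ) ^ (m - k) * (m.choose k : ℝ) * ‖(T ^ k) x‖ ^ p = 0) →
      ¬ ∃ x : X, Dense (convexHull ℝ (Set.range fun n : ℕ => (T ^ n) x)) := by
  intro m
  induction m with
  | zero =>
    intro T hiso _
    obtain ⟨z, hz⟩ := exists_ne (0 : X)
    have h0 := hiso z
    simp only [zero_add, Finset.sum_range_one, Nat.choose_self, Nat.cast_one,
      Nat.sub_self, pow_zero, one_mul, ContinuousLinearMap.one_apply] at h0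
    rw [(Real.rpow_eq_zero (norm_nonneg z) hp.ne')] at h0
    exact hz (norm_eq_zero.mp h0)
  | succ d ih =>
    intro T hiso hcc
    set A : X → ℕ → ℝ := fun z n => ‖(T ^ n) z‖ ^ p with hA
    have hApos : ∀ z n, 0 ≤ A z n := fun z n => Real.rpow_nonneg (norm_nonneg _) p
    have hsum_eq : ∀ (j : ℕ) (z : X), (fwdDiff (1:ℕ))^[j] (A z) 0
        = ∑ k ∈ Finset.range (j+1), (-1:ℝ)^(j-k) * (j.choose k : ℝ) * ‖(T ^ k) z‖ ^ p := by
      intro j z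
      rw [fwdDiff_iter_eq_sum_shift]
      refine Finset.sum_congr rfl fun k _ => ?_
      rw [zsmul_eq_mul]
      push_cast
      congr 1
      simp only [hA, smul_eq_mul, mul_one, zero_add]
      rw [← ContinuousLinearMap.coe_coe, ContinuousLinearMap.toLinearMap_pow, Module.End.coe_pow]; rfl
    have hΔtop : ∀ z : X, (fwdDiff (1:ℕ))^[d+1] (A z) = 0 := by
      intro z; funext n
      show (fwdDiff (1:ℕ))^[d+1] (A z) n = 0
      rw [fwdDiff_iter_eq_sum_shift, ← hiso ((T ^ n) z)]
      refine Finset.sum_congr rfl fun k _ => ?_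
      rw [zsmul_eq_mul]
      push_cast
      congr 1
      simp only [hA, smul_eq_mul, mul_one]
      rw [show n + k = k + n from add_comm n k, pow_add, ContinuousLinearMap.mul_apply]
      rw [← ContinuousLinearMap.coe_coe, ContinuousLinearMap.toLinearMap_pow, Module.End.coe_pow,
        ← ContinuousLinearMap.coe_coe, ContinuousLinearMap.toLinearMap_pow, Module.End.coe_pow]; rfl
    set c : X → ℝ := fun z => (fwdDiff (1:ℕ))^[d] (A z) 0 with hc
    have hlim : ∀ z, Tendsto (fun n : ℕ => A z n / (n.choose d : ℝ)) atTop (𝓝 (c z)) :=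
      fun z => tendsto_div_choose_fwdDiff (A z) d (hΔtop z)
    have hc0 : ∀ z, 0 ≤ c z := fun z =>
      ge_of_tendsto' (hlim z) fun n => div_nonneg (hApos z n) (Nat.cast_nonneg _)
    have hshift : ∀ (f : ℕ → ℝ) (j n₀ : ℕ),
        (fwdDiff (1:ℕ))^[j] (fun i => f (i+1)) n₀ = (fwdDiff (1:ℕ))^[j] f (n₀+1) := by
      intro f j
      induction j generalizing f with
      | zero => intro n₀; rfl
      | succ j ihj =>
        intro n₀
        rw [Function.iterate_succ_apply, Function.iterate_succ_apply]
        have h : (fwdDiff (1:ℕ)) (fun i => f (i+1)) = fun i => (fwdDiff (1:ℕ)) f (i+1) := rfl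
        rw [h, ihj]
    have hcT : ∀ z, c (T z) = c z := by
      intro z
      have hAT : A (T z) = fun n => A z (n + 1) := by
        funext n
        show ‖(T ^ n) (T z)‖ ^ p = ‖(T ^ (n+1)) z‖ ^ p
        rw [pow_succ, ContinuousLinearMap.mul_apply]
      have h1 : c (T z) = (fwdDiff (1:ℕ))^[d] (A z) 1 := by
        show (fwdDiff (1:ℕ))^[d] (A (T z)) 0 = _
        rw [hAT, hshift]
      have h2 := congrFun (hΔtop z) 0
      rw [Function.iterate_succ_apply'] at h2
      have h3 : (fwdDiff (1:ℕ))^[d] (A z) (0+1) - (fwdDiff (1:ℕ))^[d] (A z) 0 = 0 := h2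
      rw [h1]
      show (fwdDiff (1:ℕ))^[d] (A z) 1 = (fwdDiff (1:ℕ))^[d] (A z) 0
      have : (0:ℕ)+1 = 1 := rfl
      rw [← this]
      linarith [h3]
    have hcTn : ∀ (n : ℕ) (z : X), c ((T ^ n) z) = c z := by
      intro n
      induction n with
      | zero => intro z; rw [pow_zero, ContinuousLinearMap.one_apply]
      | succ n ihn =>
        intro z
        rw [pow_succ, ContinuousLinearMap.mul_apply, ihn (T z), hcT]
    set g : X → ℝ := fun z => (c z) ^ p⁻¹ with hg
    have hg0 : ∀ z, 0 ≤ g z := fun z => Real.rpow_nonneg (hc0 z) _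
    have hglim : ∀ z, Tendsto (fun n : ℕ => (A z n / (n.choose d : ℝ)) ^ p⁻¹) atTop (𝓝 (g z)) :=
      fun z => (hlim z).rpow_const (Or.inr (inv_nonneg.mpr hp.le))
    have hgadd : ∀ y z, g (y + z) ≤ g y + g z := by
      intro y z
      refine le_of_tendsto_of_tendsto (hglim (y+z)) ((hglim y).add (hglim z)) ?_
      filter_upwards [eventually_ge_atTop d] with n hn
      have hC : (0:ℝ) < (n.choose d : ℝ) := by exact_mod_cast Nat.choose_pos hn
      have key : ∀ w : X, (A w n / (n.choose d : ℝ)) ^ p⁻¹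
          = ‖(T ^ n) w‖ / ((n.choose d : ℝ)) ^ p⁻¹ := by
        intro w
        rw [Real.div_rpow (hApos w n) hC.le]
        congr 1
        show (‖(T ^ n) w‖ ^ p) ^ p⁻¹ = _
        rw [← Real.rpow_mul (norm_nonneg _), mul_inv_cancel₀ hp.ne', Real.rpow_one]
      have hCp : 0 < ((n.choose d : ℝ)) ^ p⁻¹ := Real.rpow_pos_of_pos hC _
      rw [key, key, key, ← add_div]
      refine div_le_div_of_nonneg_right ?_ hCp.le
      rw [map_add]
      exact norm_add_le _ _
    have hghom : ∀ (t : ℝ), 0 ≤ t → ∀ z, g (t • z) = t * g z := by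
      intro t ht z
      have hAt : A (t • z) = fun n => t ^ p * A z n := by
        funext n
        show ‖(T ^ n) (t • z)‖ ^ p = t ^ p * ‖(T ^ n) z‖ ^ p
        rw [ContinuousLinearMap.map_smul_of_tower, norm_smul, Real.norm_of_nonneg ht,
          Real.mul_rpow ht (norm_nonneg _)]
      have hct : c (t • z) = t ^ p * c z := by
        show (fwdDiff (1:ℕ))^[d] (A (t • z)) 0 = t ^ p * (fwdDiff (1:ℕ))^[d] (A z) 0
        have : A (t • z) = (t ^ p) • (A z) := by
          rw [hAt]; funext n; simp [smul_eq_mul]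
        rw [this, fwdDiff_iter_const_smul]
        simp [smul_eq_mul]
      show (c (t • z)) ^ p⁻¹ = t * (c z) ^ p⁻¹
      rw [hct, Real.mul_rpow (Real.rpow_nonneg ht p) (hc0 z),
        ← Real.rpow_mul ht, mul_inv_cancel₀ hp.ne', Real.rpow_one]
    have hgcont : Continuous g := by
      have hceq : c = fun z => ∑ k ∈ Finset.range (d+1),
          (-1:ℝ)^(d-k) * (d.choose k : ℝ) * ‖(T ^ k) z‖ ^ p := funext fun z => hsum_eq d z
      have hccont : Continuous c := by
        rw [hceq]
        apply continuous_finset_sum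
        intro k _
        exact continuous_const.mul
          (Continuous.rpow_const ((T ^ k).continuous.norm) fun z => Or.inr hp.le)
      exact hccont.rpow_const fun z => Or.inr (inv_nonneg.mpr hp.le)
    obtain ⟨x, hx⟩ := hcc
    have horb : ∀ n : ℕ, g ((T ^ n) x) = g x := by
      intro n
      show (c ((T ^ n) x)) ^ p⁻¹ = (c x) ^ p⁻¹
      rw [hcTn n x]
    set S := {z : X | g z ≤ g x} with hS
    have hSconv : Convex ℝ S := by
      intro a ha b hb s t hs ht hst
      have h1 : g (s • a + t • b) ≤ s * g a + t * g b := by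
        calc g (s • a + t • b) ≤ g (s • a) + g (t • b) := hgadd _ _
          _ = s * g a + t * g b := by rw [hghom s hs, hghom t ht]
      have ha' : g a ≤ g x := ha
      have hb' : g b ≤ g x := hb
      show g (s • a + t • b) ≤ g x
      calc g (s • a + t • b) ≤ s * g a + t * g b := h1
        _ ≤ s * g x + t * g x :=
          add_le_add (mul_le_mul_of_nonneg_left ha' hs) (mul_le_mul_of_nonneg_left hb' ht)
        _ = (s + t) * g x := by ring
        _ = g x := by rw [hst, one_mul]
    have hSclosed : IsClosed S := isClosed_le hgcont continuous_const
    have hsub : Set.range (fun n : ℕ => (T ^ n) x) ⊆ S := by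
      rintro _ ⟨n, rfl⟩
      exact le_of_eq (horb n)
    have hhull : convexHull ℝ (Set.range fun n : ℕ => (T ^ n) x) ⊆ S :=
      convexHull_min hsub hSconv
    have hall : ∀ z, g z ≤ g x := by
      intro z
      have hdense : Dense S := hx.mono hhull
      have hz : z ∈ closure S := hdense z
      rwa [hSclosed.closure_eq] at hz
    have hgzero : ∀ z, g z = 0 := by
      intro z
      by_contra hne
      have hpos : 0 < g z := lt_of_le_of_ne (hg0 z) (Ne.symm hne)
      obtain ⟨n, hn⟩ := exists_nat_gt (g x / g z)
      have h1 : (n : ℝ) * g z ≤ g x := by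
        have := hall ((n : ℝ) • z)
        rwa [hghom (n : ℝ) (Nat.cast_nonneg n) z] at this
      have h2 : g x < n * g z := (div_lt_iff₀ hpos).mp hn
      linarith
    have hczero : ∀ z, c z = 0 := by
      intro z
      have h := hgzero z
      exact (Real.rpow_eq_zero (hc0 z) (inv_ne_zero hp.ne')).mp h
    have hiso' : ∀ z : X, ∑ k ∈ Finset.range (d + 1),
        (-1:ℝ)^(d-k) * (d.choose k : ℝ) * ‖(T ^ k) z‖ ^ p = 0 := by
      intro z
      rw [← hsum_eq d z]
      exact hczero z
    exact ih T hiso' ⟨x, hx⟩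

/-- An `m`-isometry (a strict `(m,p)`-isometry for some `p > 0`, `m ≥ 1`) on a nonzero
(real or complex) Banach space is not convex-cyclic. -/
theorem m_isometry_not_convexCyclic
    {𝕜 : Type*} [RCLike 𝕜] {X : Type*} [NormedAddCommGroup X] [NormedSpace 𝕜 X]
    [NormedSpace ℝ X] [IsScalarTower ℝ 𝕜 X] [CompleteSpace X] [Nontrivial X]
    (T : X →L[𝕜] X) (m : ℕ) (hm : 1 ≤ m) (p : ℝ) (hp : 0 < p)
    (hiso : ∀ x : X,
      ∑ k ∈ Finset.range (m + 1),
        (-1 : ℝ) ^ (m - k) * (m.choose k : ℝ) * ‖(T ^ k) x‖ ^ p = 0) :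
    ¬ ∃ x : X, Dense (convexHull ℝ (Set.range fun n : ℕ => (T ^ n) x)) := by
  exact aux_not_convexCyclic p hp m T hiso
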